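/- Let U ⊆ ℝ² be open with coordinates (u,v) and let ρ, Λ : U → ℝ be smooth and positive, satisfying the curvature-one condition Δ₀(log ρ − log Λ) = −2ρ/Λ on U (this says that the conformal metric III = (ρ/Λ)(du²+dv²) has Gaussian curvature 1). Then at each point of U the equation Λ Δ₀ log Λ = ρ + 1/ρ holds if and only if ρ² + Λ Δ₀ρ = 1 + (Λ/ρ)(ρ_u² + ρ_v²), i.e. if and only if ρ satisfies the Ribaucour equation ρ² + ρΔρ = 1 + |∇ρ|² with Laplacian Δ = (Λ/ρ)Δ₀ and gradient norm |∇ρ|² = (Λ/ρ)(ρ_u²+ρ_v²) taken with respect to the metric (ρ/Λ)(du²+dv²). -/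

import Mathlib

/-- Partial derivative in the `u`-direction of a function on `ℝ²`. -/
noncomputable def pu (f : ℝ × ℝ → ℝ) (p : ℝ × ℝ) : ℝ := fderiv ℝ f p (1, 0)

/-- Partial derivative in the `v`-direction of a function on `ℝ²`. -/
noncomputable def pv (f : ℝ × ℝ → ℝ) (p : ℝ × ℝ) : ℝ := fderiv ℝ f p (0, 1)

/-- Flat Laplacian `Δ₀f = f_uu + f_vv` on `ℝ²`. -/
noncomputable def lap2 (f : ℝ × ℝ → ℝ) (p : ℝ × ℝ) : ℝ := pu (pu f) p + pv (pv f) p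

section aux
variable {U : Set (ℝ × ℝ)} {f : ℝ × ℝ → ℝ} {p : ℝ × ℝ} {w : ℝ × ℝ}

/-- `q ↦ fderiv f q w` is smooth on an open set where `f` is smooth. -/
lemma pd_contDiffOn (hU : IsOpen U) (hf : ContDiffOn ℝ (⊤ : ℕ∞) f U) (w : ℝ × ℝ) :
    ContDiffOn ℝ (⊤ : ℕ∞) (fun q => fderiv ℝ f q w) U :=
  (hf.fderiv_of_isOpen hU (by exact_mod_cast le_top)).clm_apply contDiffOn_const

lemma pd_diffAt (hU : IsOpen U) (hf : ContDiffOn ℝ (⊤ : ℕ∞) f U) (hp : p ∈ U) (w : ℝ × ℝ) :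
    DifferentiableAt ℝ (fun q => fderiv ℝ f q w) p :=
  ((pd_contDiffOn hU hf w).differentiableOn (by simp)).differentiableAt (hU.mem_nhds hp)

lemma f_diffAt (hU : IsOpen U) (hf : ContDiffOn ℝ (⊤ : ℕ∞) f U) (hp : p ∈ U) :
    DifferentiableAt ℝ f p :=
  (hf.differentiableOn (by simp)).differentiableAt (hU.mem_nhds hp)

/-- First derivative of `log ∘ f`. -/
lemma pd_log (hU : IsOpen U) (hf : ContDiffOn ℝ (⊤ : ℕ∞) f U) (hp : p ∈ U) (hfp : f p ≠ 0)
    (w : ℝ × ℝ) :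
    fderiv ℝ (fun q => Real.log (f q)) p w = (f p)⁻¹ * fderiv ℝ f p w := by
  have hd := f_diffAt hU hf hp
  have h := (Real.hasDerivAt_log hfp).comp_hasFDerivAt p hd.hasFDerivAt
  have : fderiv ℝ (fun q => Real.log (f q)) p = (f p)⁻¹ • fderiv ℝ f p := h.fderiv
  rw [this]; simp

/-- Second derivative of `log ∘ f` in a fixed direction. -/
lemma pd_pd_log (hU : IsOpen U) (hf : ContDiffOn ℝ (⊤ : ℕ∞) f U) (hp : p ∈ U)
    (hfU : ∀ q ∈ U, f q ≠ 0) (w : ℝ × ℝ) :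
    fderiv ℝ (fun q => fderiv ℝ (fun r => Real.log (f r)) q w) p w
      = fderiv ℝ (fun q => fderiv ℝ f q w) p w / f p - (fderiv ℝ f p w) ^ 2 / (f p) ^ 2 := by
  have hfp := hfU p hp
  have hd := f_diffAt hU hf hp
  have hev : (fun q => fderiv ℝ (fun r => Real.log (f r)) q w)
      =ᶠ[nhds p] fun q => (f q)⁻¹ * fderiv ℝ f q w := by
    filter_upwards [hU.mem_nhds hp] with q hq
    exact pd_log hU hf hq (hfU q hq) w
  rw [hev.fderiv_eq]
  have hinv : HasFDerivAt (fun q => (f q)⁻¹)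
      ((-(f p ^ 2)⁻¹) • fderiv ℝ f p) p :=
    (hasDerivAt_inv hfp).comp_hasFDerivAt p hd.hasFDerivAt
  have hg := (pd_diffAt hU hf hp w).hasFDerivAt
  have hmul := hinv.fun_mul hg
  rw [hmul.fderiv]
  have hne : f p ^ 2 ≠ 0 := pow_ne_zero 2 hfp
  simp only [ContinuousLinearMap.add_apply, ContinuousLinearMap.smul_apply,
    ContinuousLinearMap.smul_apply, smul_eq_mul]
  field_simp
  ring

lemma lap2_log (hU : IsOpen U) (hf : ContDiffOn ℝ (⊤ : ℕ∞) f U) (hp : p ∈ U)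
    (hfU : ∀ q ∈ U, f q ≠ 0) :
    lap2 (fun q => Real.log (f q)) p
      = lap2 f p / f p - (pu f p ^ 2 + pv f p ^ 2) / (f p) ^ 2 := by
  have hpu : ∀ h : ℝ × ℝ → ℝ, pu h = fun q => fderiv ℝ h q (1,0) := fun _ => rfl
  have hpv : ∀ h : ℝ × ℝ → ℝ, pv h = fun q => fderiv ℝ h q (0,1) := fun _ => rfl
  simp only [lap2, hpu, hpv, pu, pv]
  rw [pd_pd_log hU hf hp hfU (1,0), pd_pd_log hU hf hp hfU (0,1)]
  ring

lemma lap2_sub {g : ℝ × ℝ → ℝ} (hU : IsOpen U) (hf : ContDiffOn ℝ (⊤ : ℕ∞) f U)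
    (hg : ContDiffOn ℝ (⊤ : ℕ∞) g U) (hp : p ∈ U) :
    lap2 (fun q => f q - g q) p = lap2 f p - lap2 g p := by
  have key : ∀ w : ℝ × ℝ,
      fderiv ℝ (fun q => fderiv ℝ (fun r => f r - g r) q w) p w
        = fderiv ℝ (fun q => fderiv ℝ f q w) p w - fderiv ℝ (fun q => fderiv ℝ g q w) p w := by
    intro w
    have hev : (fun q => fderiv ℝ (fun r => f r - g r) q w)
        =ᶠ[nhds p] fun q => fderiv ℝ f q w - fderiv ℝ g q w := by
      filter_upwards [hU.mem_nhds hp] with q hq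
      rw [fderiv_fun_sub (f_diffAt hU hf hq) (f_diffAt hU hg hq)]
      simp
    rw [hev.fderiv_eq, fderiv_fun_sub (pd_diffAt hU hf hp w) (pd_diffAt hU hg hp w)]
    simp
  have hpu : ∀ h : ℝ × ℝ → ℝ, pu h = fun q => fderiv ℝ h q (1,0) := fun _ => rfl
  have hpv : ∀ h : ℝ × ℝ → ℝ, pv h = fun q => fderiv ℝ h q (0,1) := fun _ => rfl
  simp only [lap2, hpu, hpv, pu, pv, key (1,0), key (0,1)]
  ring

end aux

/-- let `ρ, Λ > 0` be smooth on the open set `U` and satisfy the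
curvature-one condition `Δ₀(log ρ - log Λ) = -2ρ/Λ` (the metric `(ρ/Λ)(du²+dv²)` has
Gaussian curvature `1`). Then at each point `Λ Δ₀ log Λ = ρ + 1/ρ` holds iff
`ρ² + Λ Δ₀ρ = 1 + (Λ/ρ)(ρ_u² + ρ_v²)`, i.e. iff `ρ` satisfies the Ribaucour equation
`ρ² + ρΔρ = 1 + |∇ρ|²` with respect to the metric `(ρ/Λ)(du²+dv²)`. -/
theorem gauss_equation_iff_ribaucour_equation
    (U : Set (ℝ × ℝ)) (hU : IsOpen U)
    (ρ Lam : ℝ × ℝ → ℝ)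
    (hρ : ContDiffOn ℝ (⊤ : ℕ∞) ρ U) (hLam : ContDiffOn ℝ (⊤ : ℕ∞) Lam U)
    (hρpos : ∀ p ∈ U, 0 < ρ p) (hLampos : ∀ p ∈ U, 0 < Lam p)
    (hcurv : ∀ p ∈ U,
      lap2 (fun q => Real.log (ρ q) - Real.log (Lam q)) p = -(2 * ρ p / Lam p)) :
    ∀ p ∈ U,
      (Lam p * lap2 (fun q => Real.log (Lam q)) p = ρ p + 1 / ρ p) ↔
      (ρ p ^ 2 + Lam p * lap2 ρ p = 1 + (Lam p / ρ p) * (pu ρ p ^ 2 + pv ρ p ^ 2)) := by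
  intro p hp
  have hρ0 : ρ p ≠ 0 := (hρpos p hp).ne'
  have hΛ0 : Lam p ≠ 0 := (hLampos p hp).ne'
  have hρU : ∀ q ∈ U, ρ q ≠ 0 := fun q hq => (hρpos q hq).ne'
  have hΛU : ∀ q ∈ U, Lam q ≠ 0 := fun q hq => (hLampos q hq).ne'
  have hlogρ := lap2_log hU hρ hp hρU
  have hlogΛ := lap2_log hU hLam hp hΛU
  have hsub := lap2_sub hU (hρ.log hρU) (hLam.log hΛU) hp
  have hc := hcurv p hp
  rw [hsub, hlogρ, hlogΛ] at hc
  have hB : lap2 (fun q => Real.log (Lam q)) p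
      = lap2 ρ p / ρ p - (pu ρ p ^ 2 + pv ρ p ^ 2) / ρ p ^ 2 + 2 * ρ p / Lam p := by
    rw [hlogΛ]; linarith
  rw [hB]
  constructor <;> intro h
  · field_simp at h ⊢
    have h2 : (Lam p * ρ p ^ 2) * ((ρ p ^ 2 + Lam p * lap2 ρ p) * ρ p)
        = (Lam p * ρ p ^ 2) * (ρ p + Lam p * (pu ρ p ^ 2 + pv ρ p ^ 2)) := by
      linear_combination (Lam p * ρ p ^ 2) * h
    exact mul_left_cancel₀ (mul_ne_zero hΛ0 (pow_ne_zero 2 hρ0)) (by linear_combination h2)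
  · field_simp at h ⊢
    linear_combination h
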